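/- Let a ≥ 1 be a real number. Then, using the principal branch of the complex square root, the function ε ↦ (1-((a:ℂ)+iε)²)^(1/2) tends to -i·√(a²-1) as ε → 0 from above (along the filter 𝓝[>]0), and the function ε ↦ (1-((a:ℂ)-iε)²)^(1/2) tends to +i·√(a²-1) as ε → 0 from above. Here √(a²-1) denotes the nonnegative real square root. -/

import Mathlib

open Complex Filter

lemma sqrt_neg_im {w : ℂ} (hw : w.im < 0) :
    w ^ ((1 : ℂ) / 2) = -Complex.I * (-w) ^ ((1 : ℂ) / 2) := by
  have hw0 : w ≠ 0 := by intro h; simp [h] at hw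
  rw [Complex.cpow_def_of_ne_zero hw0, Complex.cpow_def_of_ne_zero (neg_ne_zero.2 hw0)]
  simp only [Complex.log, Complex.arg_neg_eq_arg_add_pi_of_im_neg hw, norm_neg]
  have : (↑(Real.log ‖w‖) + (↑(w.arg + Real.pi)) * Complex.I) * ((1 : ℂ) / 2)
      = (↑(Real.log ‖w‖) + ↑w.arg * Complex.I) * ((1 : ℂ) / 2)
        + Real.pi / 2 * Complex.I := by
    push_cast; ring
  rw [this, Complex.exp_add]
  have hexp : Complex.exp (↑Real.pi / 2 * Complex.I) = Complex.I := by
    rw [Complex.exp_mul_I]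
    simp [Complex.cos_pi_div_two, Complex.sin_pi_div_two]
  rw [hexp]; ring_nf; rw [Complex.I_sq]; ring

lemma sqrt_pos_im {w : ℂ} (hw : 0 < w.im) :
    w ^ ((1 : ℂ) / 2) = Complex.I * (-w) ^ ((1 : ℂ) / 2) := by
  have h := sqrt_neg_im (w := -w) (by simpa using hw)
  rw [neg_neg] at h
  rw [h, ← mul_assoc, mul_neg, Complex.I_mul_I, neg_neg, one_mul]

lemma sqrt_cont (c : ℝ) (hc : 0 ≤ c) :
    ContinuousAt (fun z : ℂ => z ^ ((1 : ℂ) / 2)) (c : ℂ) := by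
  apply continuousAt_cpow_const_of_re_pos
  · left; simpa using hc
  · norm_num

theorem stmt1 (a : ℝ) (ha : 1 ≤ a) :
    Tendsto (fun ε : ℝ => (1 - ((a : ℂ) + Complex.I * ε) ^ 2) ^ ((1 : ℂ) / 2))
      (nhdsWithin 0 (Set.Ioi 0))
      (nhds (-Complex.I * Real.sqrt (a ^ 2 - 1))) ∧
    Tendsto (fun ε : ℝ => (1 - ((a : ℂ) - Complex.I * ε) ^ 2) ^ ((1 : ℂ) / 2))
      (nhdsWithin 0 (Set.Ioi 0))
      (nhds (Complex.I * Real.sqrt (a ^ 2 - 1))) := by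
  have ha0 : 0 < a := lt_of_lt_of_le one_pos ha
  have hc : (0 : ℝ) ≤ a ^ 2 - 1 := by nlinarith
  -- the limit value: √(a²-1) as complex cpow
  have hval : ((a ^ 2 - 1 : ℝ) : ℂ) ^ ((1 : ℂ) / 2) = (Real.sqrt (a ^ 2 - 1) : ℂ) := by
    rw [show ((1 : ℂ) / 2) = (((1 : ℝ) / 2 : ℝ) : ℂ) by norm_num,
      ← Complex.ofReal_cpow hc, Real.sqrt_eq_rpow]
  -- tendsto of the inner polynomial g±(ε) = (a ± iε)² - 1 → a² - 1
  have hg₁ : Tendsto (fun ε : ℝ => (((a : ℂ) + Complex.I * ε) ^ 2 - 1))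
      (nhdsWithin 0 (Set.Ioi 0)) (nhds ((a ^ 2 - 1 : ℝ) : ℂ)) := by
    have hcont : Continuous (fun ε : ℝ => (((a : ℂ) + Complex.I * ε) ^ 2 - 1)) := by
      fun_prop
    have h0 := hcont.tendsto (0 : ℝ)
    have h1 := h0.mono_left (nhdsWithin_le_nhds (s := Set.Ioi 0))
    convert h1 using 2
    push_cast; ring
  have hg₂ : Tendsto (fun ε : ℝ => (((a : ℂ) - Complex.I * ε) ^ 2 - 1))
      (nhdsWithin 0 (Set.Ioi 0)) (nhds ((a ^ 2 - 1 : ℝ) : ℂ)) := by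
    have hcont : Continuous (fun ε : ℝ => (((a : ℂ) - Complex.I * ε) ^ 2 - 1)) := by
      fun_prop
    have h0 := hcont.tendsto (0 : ℝ)
    have h1 := h0.mono_left (nhdsWithin_le_nhds (s := Set.Ioi 0))
    convert h1 using 2
    push_cast; ring
  have hcont := sqrt_cont (a ^ 2 - 1) hc
  have hsq₁ := hcont.tendsto.comp hg₁
  have hsq₂ := hcont.tendsto.comp hg₂
  rw [hval] at hsq₁ hsq₂
  constructor
  · have heq : ∀ᶠ ε : ℝ in nhdsWithin 0 (Set.Ioi 0),
        (1 - ((a : ℂ) + Complex.I * ε) ^ 2) ^ ((1 : ℂ) / 2)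
          = -Complex.I * ((((a : ℂ) + Complex.I * ε) ^ 2 - 1) ^ ((1 : ℂ) / 2)) := by
      filter_upwards [self_mem_nhdsWithin] with ε (hε : 0 < ε)
      have him : (1 - ((a : ℂ) + Complex.I * ε) ^ 2).im < 0 := by
        simp [Complex.sub_im, Complex.mul_im, Complex.add_im, pow_two, Complex.mul_re]
        nlinarith
      rw [sqrt_neg_im him]
      ring_nf
    refine Tendsto.congr' (Filter.EventuallyEq.symm heq) ?_
    simpa using (tendsto_const_nhds (x := -Complex.I)).mul hsq₁
  · have heq : ∀ᶠ ε : ℝ in nhdsWithin 0 (Set.Ioi 0),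
        (1 - ((a : ℂ) - Complex.I * ε) ^ 2) ^ ((1 : ℂ) / 2)
          = Complex.I * ((((a : ℂ) - Complex.I * ε) ^ 2 - 1) ^ ((1 : ℂ) / 2)) := by
      filter_upwards [self_mem_nhdsWithin] with ε (hε : 0 < ε)
      have him : 0 < (1 - ((a : ℂ) - Complex.I * ε) ^ 2).im := by
        simp [Complex.sub_im, Complex.mul_im, pow_two, Complex.mul_re]
        nlinarith
      rw [sqrt_pos_im him]
      ring_nf
    refine Tendsto.congr' (Filter.EventuallyEq.symm heq) ?_
    simpa using (tendsto_const_nhds (x := Complex.I)).mul hsq₂
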